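/- Let C be an N×M and D an M×N matrix with nonnegative integer entries, and set A = CD, B = DC. Then the matrix identity D̂ · S_B = S_A · C holds. Consequently, for every vector v ∈ ℤ^{E_A}, the vectors S_Bᵀ D̂ᵀ v and Cᵀ S_Aᵀ v have the same class in ℤ^M/(I−Bᵀ)ℤ^M; that is, the induced homomorphisms on quotient groups satisfy Φ_{S_Bᵀ} ∘ Φ_{D̂ᵀ} = Φ_{Cᵀ} ∘ Φ_{S_Aᵀ}. -/

import Mathlib

open Matrix

/-- The edge set of the directed graph of a rectangular matrix `C` with nonnegative integer
entries: there are `C i j` edges from vertex `i` to vertex `j`. -/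
def Edge {N M : ℕ} (C : Matrix (Fin N) (Fin M) ℕ) : Type :=
  Σ i : Fin N, Σ j : Fin M, Fin (C i j)

instance {N M : ℕ} (C : Matrix (Fin N) (Fin M) ℕ) : Fintype (Edge C) := by
  unfold Edge
  haveI : ∀ i j, Fintype (Fin (C i j)) := fun i j => Fin.fintype _
  infer_instance

instance {N M : ℕ} (C : Matrix (Fin N) (Fin M) ℕ) : DecidableEq (Edge C) := by
  unfold Edge; infer_instance

/-- The source vertex of an edge. -/
def Edge.src {N M : ℕ} {C : Matrix (Fin N) (Fin M) ℕ} (e : Edge C) : Fin N := e.1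

/-- The target vertex of an edge. -/
def Edge.tar {N M : ℕ} {C : Matrix (Fin N) (Fin M) ℕ} (e : Edge C) : Fin M := e.2.1

/-- The edge set of `A = CD`, realized as composable pairs `(c, d)` of edges of `C` and `D`. -/
def PairEdgeA {N M : ℕ} (C : Matrix (Fin N) (Fin M) ℕ) (D : Matrix (Fin M) (Fin N) ℕ) :
    Type :=
  {p : Edge C × Edge D // p.1.tar = p.2.src}

/-- The edge set of `B = DC`, realized as composable pairs `(d, c)` of edges of `D` and `C`. -/
def PairEdgeB {N M : ℕ} (C : Matrix (Fin N) (Fin M) ℕ) (D : Matrix (Fin M) (Fin N) ℕ) :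
    Type :=
  {p : Edge D × Edge C // p.1.tar = p.2.src}

instance {N M : ℕ} (C : Matrix (Fin N) (Fin M) ℕ) (D : Matrix (Fin M) (Fin N) ℕ) :
    Fintype (PairEdgeA C D) := by unfold PairEdgeA; infer_instance

instance {N M : ℕ} (C : Matrix (Fin N) (Fin M) ℕ) (D : Matrix (Fin M) (Fin N) ℕ) :
    Fintype (PairEdgeB C D) := by unfold PairEdgeB; infer_instance

instance {N M : ℕ} (C : Matrix (Fin N) (Fin M) ℕ) (D : Matrix (Fin M) (Fin N) ℕ) :
    DecidableEq (PairEdgeA C D) := by unfold PairEdgeA; infer_instance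

instance {N M : ℕ} (C : Matrix (Fin N) (Fin M) ℕ) (D : Matrix (Fin M) (Fin N) ℕ) :
    DecidableEq (PairEdgeB C D) := by unfold PairEdgeB; infer_instance


lemma sum_edge {N M : ℕ} (C : Matrix (Fin N) (Fin M) ℕ) (i : Fin N) (j : Fin M) :
    (∑ e : Edge C, if i = Edge.src e ∧ Edge.tar e = j then (1:ℤ) else 0) = C i j := by
  haveI : ∀ i j, Fintype (Fin (C i j)) := fun i j => Fin.fintype _
  rw [show instFintypeEdge C = (Sigma.instFintype : Fintype (Σ i : Fin N, Σ j : Fin M, Fin (C i j))) from Subsingleton.elim _ _]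
  show (∑ e : Σ i' : Fin N, Σ j' : Fin M, Fin (C i' j'),
      if i = e.1 ∧ e.2.1 = j then (1:ℤ) else 0) = C i j
  rw [← Finset.univ_sigma_univ, Finset.sum_sigma]
  simp [← Finset.univ_sigma_univ, Finset.sum_sigma, Finset.sum_ite_eq', ite_and]
  simp [apply_ite Finset.card, Finset.card_univ, Finset.sum_ite_eq']
  convert Fintype.card_fin _

lemma lhs_entry {N M : ℕ} (C : Matrix (Fin N) (Fin M) ℕ) (D : Matrix (Fin M) (Fin N) ℕ)
    (d : Edge D) (j : Fin M) :
    (∑ b : PairEdgeB C D,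
        (if d = b.val.1 then (1:ℤ) else 0) * (if b.val.2.tar = j then 1 else 0))
      = C d.tar j := by
  show (∑ b : {p : Edge D × Edge C // Edge.tar p.1 = Edge.src p.2},
        (if d = b.val.1 then (1:ℤ) else 0) * (if b.val.2.tar = j then 1 else 0))
      = C d.tar j
  rw [← Finset.sum_subtype
    (Finset.univ.filter fun p : Edge D × Edge C => Edge.tar p.1 = Edge.src p.2)
    (by simp) (fun p => (if d = p.1 then (1:ℤ) else 0) * (if p.2.tar = j then 1 else 0))]
  rw [Finset.sum_filter, Fintype.sum_prod_type]
  rw [Finset.sum_eq_single d (by intro b _ hb; simp [Ne.symm hb]) (by simp)]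
  simp only [if_pos rfl, one_mul]
  rw [← sum_edge C d.tar j]
  apply Finset.sum_congr rfl
  intro c _
  by_cases h1 : Edge.tar d = Edge.src c <;> by_cases h2 : Edge.tar c = j <;>
    simp [h1, h2]

/-- Let `C`, `D` be rectangular nonnegative integer matrices, `A = CD`,
`B = DC`.  Then `D̂ · S_B = S_A · C`, and consequently for every `v ∈ ℤ^{E_A}` the vectors
`S_Bᵀ D̂ᵀ v` and `Cᵀ S_Aᵀ v` have the same class in `ℤ^M/(I−Bᵀ)ℤ^M`; that is,
`Φ_{S_Bᵀ} ∘ Φ_{D̂ᵀ} = Φ_{Cᵀ} ∘ Φ_{S_Aᵀ}`. -/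
theorem stmt_5 (N M : ℕ) (C : Matrix (Fin N) (Fin M) ℕ) (D : Matrix (Fin M) (Fin N) ℕ) :
    let Cz : Matrix (Fin N) (Fin M) ℤ := C.map (Nat.cast : ℕ → ℤ)
    let Dz : Matrix (Fin M) (Fin N) ℤ := D.map (Nat.cast : ℕ → ℤ)
    let Bz : Matrix (Fin M) (Fin M) ℤ := Dz * Cz
    let Dhat : Matrix (PairEdgeA C D) (PairEdgeB C D) ℤ :=
      Matrix.of fun a b => if a.val.2 = b.val.1 then 1 else 0
    let SA : Matrix (PairEdgeA C D) (Fin N) ℤ :=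
      Matrix.of fun a j => if a.val.2.tar = j then 1 else 0
    let SB : Matrix (PairEdgeB C D) (Fin M) ℤ :=
      Matrix.of fun b j => if b.val.2.tar = j then 1 else 0
    Dhat * SB = SA * Cz ∧
    ∀ v : PairEdgeA C D → ℤ,
      (QuotientAddGroup.mk (SBᵀ.mulVec (Dhatᵀ.mulVec v)) :
          (Fin M → ℤ) ⧸ AddMonoidHom.range (1 - Bzᵀ).mulVecLin.toAddMonoidHom) =
        QuotientAddGroup.mk (Czᵀ.mulVec (SAᵀ.mulVec v)) := by
  intro Cz Dz Bz Dhat SA SB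
  have key : Dhat * SB = SA * Cz := by
    ext a j
    simp only [Dhat, SB, SA, Cz, Matrix.mul_apply, Matrix.of_apply, Matrix.map_apply]
    rw [lhs_entry C D a.val.2 j]
    simp [ite_mul]
  refine ⟨key, fun v => ?_⟩
  have h2 : SBᵀ.mulVec (Dhatᵀ.mulVec v) = Czᵀ.mulVec (SAᵀ.mulVec v) := by
    rw [Matrix.mulVec_mulVec, Matrix.mulVec_mulVec, ← Matrix.transpose_mul,
      ← Matrix.transpose_mul, key]
  rw [h2]
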